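/- Let c_k : X → ℂ be defined by c_k ≡ 1 for k even, c_{4ℓ+1}(x) = (−1)^{x_{4ℓ+3}} and c_{4ℓ+3}(x) = (−1)^{x_{4ℓ+1}} for ℓ ≥ 0, define operators on L²(X, μ_X; ℂ) by (J_k f)(x) = (−1)^{x_1+⋯+x_{k−1}+1} · i · c_k(x) · f(x+δ_k) and (J'_k f)(x) = (−1)^{x_k} · i · (J_k f)(x), and let L²(X, μ_X)^ℝ := {f ∈ L²(X, μ_X; ℂ) : f(1−x) = conj(f(x)) for μ_X-a.e. x}, a real Hilbert space invariant under every J_k and J'_k. Then there is no bounded ℝ-linear map T : L²(X, μ_X)^ℝ → L²(X, μ_X)^ℝ with T² = −id that preserves the real inner product Re⟨·,·⟩ and commutes with the restriction of J_k and of J'_k for every k ≥ 1. Consequently, the real representation on L²(X, μ_X)^ℝ does not arise by restriction of scalars from any complex representation of the complexified Clifford algebra. -/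

import Mathlib

/-!
Common setup: `GWX` is the compact abelian group `X = ∏_{k ≥ 1} {0,1}` of 0-1 sequences
(with componentwise addition mod 2 and the product σ-algebra, which is generated by the
sets `X_k = {x : x_k = 1}`).  The coordinate `i : ℕ` of `x : GWX` represents the paper's
coordinate `x_{i+1}`, so the Lean index `k : ℕ` corresponds to the paper's index `k + 1`
throughout; in particular the paper's sign `(-1)^k` becomes `(-1)^(k+1)` here.
-/

open MeasureTheory Complex Filter
open scoped ENNReal

noncomputable section

abbrev GWX : Type := ℕ → ZMod 2

/-- `δ_k`: the sequence with `1` in the `k`-th place (the paper's `(k+1)`-th place)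
and `0` elsewhere. -/
def gwDelta (k : ℕ) : GWX := fun i => if i = k then 1 else 0

/-- The componentwise complement `x ↦ 1 - x`. -/
def gwFlip (x : GWX) : GWX := fun i => 1 - x i

/-- The sign `(-1)^{x_1 + ⋯ + x_{k-1} + 1}` of the paper, for the paper's index `k + 1`. -/
def gwSign (k : ℕ) (x : GWX) : ℂ := (-1 : ℂ) ^ ((∑ i ∈ Finset.range k, (x i).val) + 1)

/-- The functions `c_k` of Theorem 3.11: in the paper's (1-based) indexing, `c_k ≡ 1` for
`k` even, `c_{4ℓ+1}(x) = (-1)^{x_{4ℓ+3}}`, `c_{4ℓ+3}(x) = (-1)^{x_{4ℓ+1}}`.  In the Lean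
(0-based) indexing used here (`Lean k` = paper's `k+1`): `gwC k ≡ 1` for `k` odd,
`gwC k x = (-1)^{x (k+2)}` for `k ≡ 0 [MOD 4]`, and `gwC k x = (-1)^{x (k-2)}` for
`k ≡ 2 [MOD 4]`. -/
def gwC (k : ℕ) (x : GWX) : ℂ :=
  if k % 2 = 1 then 1
  else if k % 4 = 0 then (-1 : ℂ) ^ (x (k + 2)).val
  else (-1 : ℂ) ^ (x (k - 2)).val

namespace GWAux

/-- the all-ones sequence -/
def gwOne : GWX := fun _ => 1

lemma flip_eq_add (x : GWX) : gwFlip x = x + gwOne := by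
  funext i
  have : ∀ a : ZMod 2, 1 - a = a + 1 := by decide
  exact this (x i)

lemma add_delta_apply_ne (x : GWX) (k i : ℕ) (h : i ≠ k) : (x + gwDelta k) i = x i := by
  simp [gwDelta, h]

lemma add_delta_apply_self (x : GWX) (k : ℕ) : (x + gwDelta k) k = x k + 1 := by
  simp [gwDelta]

lemma add_delta_delta (x : GWX) (k : ℕ) : x + gwDelta k + gwDelta k = x := by
  funext i
  have : ∀ a b : ZMod 2, a + b + b = a := by decide
  exact this (x i) _

lemma flip_add_delta (x : GWX) (k : ℕ) : gwFlip x + gwDelta k = gwFlip (x + gwDelta k) := by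
  funext i
  have : ∀ a b : ZMod 2, (1 - a) + b = 1 - (a + b) := by decide
  exact this (x i) _

lemma neg_one_pow_val_add_one (a : ZMod 2) : (-1:ℂ)^((a+1).val) = -(-1:ℂ)^(a.val) := by
  have : ((a+1).val = 1 ∧ a.val = 0) ∨ ((a+1).val = 0 ∧ a.val = 1) := by revert a; decide
  rcases this with ⟨h1,h2⟩|⟨h1,h2⟩ <;> rw [h1,h2] <;> norm_num

lemma neg_one_pow_val_sub (a : ZMod 2) : (-1:ℂ)^((1-a).val) = -(-1:ℂ)^(a.val) := by
  have : (1:ZMod 2) - a = a + 1 := by revert a; decide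
  rw [this]; exact neg_one_pow_val_add_one a

lemma neg_one_pow_val_sq (a : ZMod 2) : (-1:ℂ)^(a.val) * (-1:ℂ)^(a.val) = 1 := by
  have : a.val = 0 ∨ a.val = 1 := by revert a; decide
  rcases this with h|h <;> rw [h] <;> norm_num

lemma neg_one_pow_val_ne (a : ZMod 2) : (-1:ℂ)^(a.val) ≠ 0 := pow_ne_zero _ (by norm_num)

/-- sign as a product -/
lemma gwSign_eq (k : ℕ) (x : GWX) :
    gwSign k x = -∏ i ∈ Finset.range k, (-1:ℂ)^((x i).val) := by
  rw [gwSign, pow_succ, Finset.prod_pow_eq_pow_sum]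
  ring

lemma gwSign_add_delta (k : ℕ) (x : GWX) : gwSign k (x + gwDelta k) = gwSign k x := by
  rw [gwSign_eq, gwSign_eq]
  congr 1
  refine Finset.prod_congr rfl fun i hi => ?_
  rw [add_delta_apply_ne x k i (by simpa using (Finset.mem_range.mp hi).ne)]

lemma gwSign_flip (k : ℕ) (x : GWX) : gwSign k (gwFlip x) = (-1:ℂ)^k * gwSign k x := by
  rw [gwSign_eq, gwSign_eq]
  have : ∏ i ∈ Finset.range k, (-1:ℂ)^(((gwFlip x) i).val)
      = ∏ i ∈ Finset.range k, (-(-1:ℂ)^((x i).val)) := by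
    refine Finset.prod_congr rfl fun i _ => ?_
    exact neg_one_pow_val_sub (x i)
  rw [this]
  rw [show (∏ i ∈ Finset.range k, (-(-1:ℂ)^((x i).val))) = ∏ i ∈ Finset.range k, ((-1) * (-1:ℂ)^((x i).val)) from Finset.prod_congr rfl fun i _ => (neg_one_mul _).symm]
  rw [Finset.prod_mul_distrib, Finset.prod_const, Finset.card_range]
  ring

lemma gwSign_sq (k : ℕ) (x : GWX) : gwSign k x * gwSign k x = 1 := by
  rw [gwSign]
  rw [← pow_add]
  exact Even.neg_one_pow (by exact Even.add_self _)

lemma gwSign_ne (k : ℕ) (x : GWX) : gwSign k x ≠ 0 := pow_ne_zero _ (by norm_num)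

lemma gwC_add_delta (k : ℕ) (x : GWX) : gwC k (x + gwDelta k) = gwC k x := by
  unfold gwC
  split_ifs with h1 h2
  · rfl
  · rw [add_delta_apply_ne x k (k+2) (by omega)]
  · have hk2 : k % 2 = 0 := by omega
    rw [add_delta_apply_ne x k (k-2) (by omega)]

lemma gwC_sq (k : ℕ) (x : GWX) : gwC k x * gwC k x = 1 := by
  unfold gwC
  split_ifs
  · norm_num
  · exact neg_one_pow_val_sq _
  · exact neg_one_pow_val_sq _

lemma gwC_ne (k : ℕ) (x : GWX) : gwC k x ≠ 0 := by
  unfold gwC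
  split_ifs
  · norm_num
  · exact neg_one_pow_val_ne _
  · exact neg_one_pow_val_ne _

lemma gwSign_gwC_flip (k : ℕ) (x : GWX) :
    gwSign k (gwFlip x) * gwC k (gwFlip x) = -(gwSign k x * gwC k x) := by
  rcases Nat.even_or_odd k with hk | hk
  · have hC : gwC k (gwFlip x) = -gwC k x := by
      unfold gwC
      have h2 : k % 2 = 0 := Nat.even_iff.mp hk
      by_cases h4 : k % 4 = 0
      · rw [if_neg (show ¬ k % 2 = 1 by omega), if_neg (show ¬ k % 2 = 1 by omega),
          if_pos h4, if_pos h4]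
        exact neg_one_pow_val_sub _
      · rw [if_neg (show ¬ k % 2 = 1 by omega), if_neg (show ¬ k % 2 = 1 by omega),
          if_neg h4, if_neg h4]
        exact neg_one_pow_val_sub _
    rw [gwSign_flip, hC, hk.neg_one_pow]
    ring
  · have hC : gwC k (gwFlip x) = gwC k x := by
      unfold gwC
      have h2 : k % 2 = 1 := Nat.odd_iff.mp hk
      simp [h2]
    rw [gwSign_flip, hC, hk.neg_one_pow]
    ring

def gwCIdx (k : ℕ) : ℕ := if k % 4 = 0 then k + 2 else k - 2
def gwList (k : ℕ) : List ℕ := if k % 2 = 1 then List.range k else gwCIdx k :: List.range k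
def gwEps (k : ℕ) : ℝ := if k % 4 < 2 then -1 else 1

lemma gwEps_sq (k : ℕ) : gwEps k * gwEps k = 1 := by
  unfold gwEps; split_ifs <;> norm_num

lemma list_prod_range (k : ℕ) (x : GWX) :
    ((List.range k).map fun j => (-1:ℂ)^((x j).val)).prod
      = ∏ i ∈ Finset.range k, (-1:ℂ)^((x i).val) := by
  induction k with
  | zero => simp
  | succ n ih =>
    rw [List.range_succ, List.map_append, List.prod_append, Finset.prod_range_succ, ih]
    simp

lemma gw_key (k : ℕ) (x : GWX) :
    gwSign k x * Complex.I * gwC k x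
      = (gwEps k : ℂ) * (Complex.I ^ (gwList k).length
          * ((gwList k).map fun j => (-1:ℂ)^((x j).val)).prod) := by
  have hs := gwSign_eq k x
  have Ik : Complex.I ^ k = Complex.I ^ (k % 4) := by
    conv_lhs => rw [← Nat.div_add_mod k 4]
    rw [pow_add, pow_mul, Complex.I_pow_four, one_pow, one_mul]
  have h4 : k % 4 = 0 ∨ k % 4 = 1 ∨ k % 4 = 2 ∨ k % 4 = 3 := by omega
  set P := ∏ i ∈ Finset.range k, (-1:ℂ)^((x i).val) with hP
  rcases h4 with h | h | h | h
  · have e1 : gwList k = (k + 2) :: List.range k := by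
      unfold gwList gwCIdx; rw [if_neg (by omega), if_pos h]
    have e2 : gwC k x = (-1:ℂ)^((x (k+2)).val) := by
      unfold gwC; rw [if_neg (by omega), if_pos h]
    have e3 : gwEps k = -1 := by unfold gwEps; rw [if_pos (by omega)]
    have e4 : Complex.I ^ (gwList k).length = Complex.I := by
      rw [e1]
      simp only [List.length_cons, List.length_range]
      rw [pow_succ, Ik, h, pow_zero, one_mul]
    rw [hs, e2, e3, e4, e1]
    simp only [List.map_cons, List.prod_cons, list_prod_range]
    push_cast; ring
  · have e1 : gwList k = List.range k := by
      unfold gwList; rw [if_pos (by omega)]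
    have e2 : gwC k x = 1 := by unfold gwC; rw [if_pos (by omega)]
    have e3 : gwEps k = -1 := by unfold gwEps; rw [if_pos (by omega)]
    have e4 : Complex.I ^ (gwList k).length = Complex.I := by
      rw [e1]
      simp only [List.length_range]
      rw [Ik, h, pow_one]
    rw [hs, e2, e3, e4, e1, list_prod_range]
    push_cast; ring
  · have e1 : gwList k = (k - 2) :: List.range k := by
      unfold gwList gwCIdx; rw [if_neg (by omega), if_neg (by omega)]
    have e2 : gwC k x = (-1:ℂ)^((x (k-2)).val) := by
      unfold gwC; rw [if_neg (by omega), if_neg (by omega)]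
    have e3 : gwEps k = 1 := by unfold gwEps; rw [if_neg (by omega)]
    have e4 : Complex.I ^ (gwList k).length = -Complex.I := by
      rw [e1]
      simp only [List.length_cons, List.length_range]
      rw [pow_succ, Ik, h, Complex.I_sq]
      ring
    rw [hs, e2, e3, e4, e1]
    simp only [List.map_cons, List.prod_cons, list_prod_range]
    push_cast; ring
  · have e1 : gwList k = List.range k := by
      unfold gwList; rw [if_pos (by omega)]
    have e2 : gwC k x = 1 := by unfold gwC; rw [if_pos (by omega)]
    have e3 : gwEps k = 1 := by unfold gwEps; rw [if_neg (by omega)]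
    have e4 : Complex.I ^ (gwList k).length = -Complex.I := by
      rw [e1]
      simp only [List.length_range]
      rw [Ik, h, pow_succ, Complex.I_sq]
      ring
    rw [hs, e2, e3, e4, e1, list_prod_range]
    push_cast; ring
variable {μX : Measure GWX}

lemma meas_add (y : GWX) : Measurable (fun x : GWX => x + y) :=
  measurable_pi_lambda _ fun i =>
    (Measurable.of_discrete (f := fun a : ZMod 2 => a + y i)).comp (measurable_pi_apply i)

lemma mp_add (hHaar : ∀ y : GWX, μX.map (· + y) = μX) (y : GWX) :
    MeasurePreserving (fun x : GWX => x + y) μX μX := ⟨meas_add y, hHaar y⟩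

lemma ae_comp_add (hHaar : ∀ y : GWX, μX.map (· + y) = μX) (y : GWX) {f g : GWX → ℂ}
    (h : f =ᵐ[μX] g) : (fun x => f (x + y)) =ᵐ[μX] (fun x => g (x + y)) :=
  (mp_add hHaar y).quasiMeasurePreserving.ae_eq_comp h

lemma gwFlip_eq : gwFlip = (fun x : GWX => x + gwOne) := funext flip_eq_add

lemma mp_flip (hHaar : ∀ y : GWX, μX.map (· + y) = μX) :
    MeasurePreserving gwFlip μX μX := by
  rw [gwFlip_eq]; exact mp_add hHaar gwOne

lemma ae_comp_flip (hHaar : ∀ y : GWX, μX.map (· + y) = μX) {f g : GWX → ℂ}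
    (h : f =ᵐ[μX] g) : (fun x => f (gwFlip x)) =ᵐ[μX] (fun x => g (gwFlip x)) :=
  (mp_flip hHaar).quasiMeasurePreserving.ae_eq_comp h

/-- Walsh character indexed by a finite set. -/
def gwChar (S : Finset ℕ) (x : GWX) : ℂ := ∏ j ∈ S, (-1:ℂ)^((x j).val)

lemma gwChar_measurable (S : Finset ℕ) : Measurable (gwChar S) :=
  Finset.measurable_prod _ fun j _ =>
    (Measurable.of_discrete (f := fun a : ZMod 2 => (-1:ℂ)^(a.val))).comp (measurable_pi_apply j)

lemma gwChar_norm (S : Finset ℕ) (x : GWX) : ‖gwChar S x‖ ≤ 1 := by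
  rw [gwChar, norm_prod]
  refine le_of_eq (Finset.prod_eq_one fun j _ => ?_)
  rw [norm_pow, norm_neg, norm_one, one_pow]

lemma gwChar_add_delta (S : Finset ℕ) {k : ℕ} (hk : k ∈ S) (x : GWX) :
    gwChar S (x + gwDelta k) = -gwChar S x := by
  rw [gwChar, gwChar, ← Finset.mul_prod_erase _ _ hk, ← Finset.mul_prod_erase _ _ hk]
  have h1 : ((x + gwDelta k) k).val = (x k + 1).val := by rw [add_delta_apply_self]
  have h2 : ∏ j ∈ S.erase k, (-1:ℂ)^(((x + gwDelta k) j).val)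
      = ∏ j ∈ S.erase k, (-1:ℂ)^((x j).val) := by
    refine Finset.prod_congr rfl fun j hj => ?_
    rw [add_delta_apply_ne x k j (Finset.ne_of_mem_erase hj)]
  rw [h1, h2, neg_one_pow_val_add_one]
  ring

lemma gw_factor (a b : ZMod 2) :
    ((1:ℂ) + (-1)^(b.val) * (-1)^(a.val))/2 = if a = b then 1 else 0 := by
  have h : ∀ c : ZMod 2, c.val = 0 ∨ c.val = 1 := by decide
  have hab : a = b ↔ a.val = b.val := ⟨fun h => by rw [h], fun h => ZMod.val_injective 2 h⟩
  rcases h a with ha | ha <;> rcases h b with hb | hb <;> simp [hab, ha, hb] <;> norm_num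
/-- point cylinder -/
def gwCyl (s : Finset ℕ) (e : GWX) : Set GWX := {x : GWX | ∀ j ∈ s, x j = e j}

lemma gwCyl_measurable (s : Finset ℕ) (e : GWX) : MeasurableSet (gwCyl s e) := by
  have : gwCyl s e = ⋂ j ∈ (s : Set ℕ), (fun x : GWX => x j) ⁻¹' {e j} := by
    ext x; simp [gwCyl, Set.mem_iInter]
  rw [this]
  exact MeasurableSet.biInter (s.countable_toSet) fun j _ =>
    measurable_pi_apply j (MeasurableSet.singleton (e j))

def gwCylSys : Set (Set GWX) := {A | ∃ s : Finset ℕ, ∃ e : GWX, A = gwCyl s e}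

lemma gwCylSys_pi : IsPiSystem gwCylSys := by
  rintro A ⟨s, e, rfl⟩ B ⟨t, f, rfl⟩ hne
  refine ⟨s ∪ t, fun j => if j ∈ s then e j else f j, ?_⟩
  obtain ⟨y, hy1, hy2⟩ := hne
  ext x
  constructor
  · rintro ⟨hx1, hx2⟩ j hj
    show x j = if j ∈ s then e j else f j
    by_cases hjs : j ∈ s
    · rw [if_pos hjs]; exact hx1 j hjs
    · rw [if_neg hjs]
      exact hx2 j (by rcases Finset.mem_union.mp hj with h | h; exact absurd h hjs; exact h)
  · intro hx
    constructor
    · intro j hj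
      have h' : x j = if j ∈ s then e j else f j := hx j (Finset.mem_union_left _ hj)
      rwa [if_pos hj] at h'
    · intro j hj
      have h' : x j = if j ∈ s then e j else f j := hx j (Finset.mem_union_right _ hj)
      by_cases hjs : j ∈ s
      · rw [if_pos hjs] at h'
        rw [h', ← hy1 j hjs, hy2 j hj]
      · rwa [if_neg hjs] at h' 

lemma gwCylSys_gen :
    (inferInstance : MeasurableSpace GWX) = MeasurableSpace.generateFrom gwCylSys := by
  refine le_antisymm ?_ ?_
  · have hcoord : ∀ i : ℕ, @Measurable GWX (ZMod 2) (MeasurableSpace.generateFrom gwCylSys) _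
        (fun x => x i) := by
      intro i
      apply @measurable_to_countable' (ZMod 2) GWX _ _ (MeasurableSpace.generateFrom gwCylSys)
        (fun x => x i)
      intro a
      have : (fun x : GWX => x i) ⁻¹' {a} = gwCyl {i} (fun _ => a) := by
        ext x; simp [gwCyl]
      rw [this]
      exact MeasurableSpace.measurableSet_generateFrom ⟨{i}, fun _ => a, rfl⟩
    have hid : @Measurable GWX GWX (MeasurableSpace.generateFrom gwCylSys)
        MeasurableSpace.pi id := by
      rw [@measurable_pi_iff]
      exact hcoord
    exact fun A hA => hid hA
  · refine MeasurableSpace.generateFrom_le ?_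
    rintro A ⟨s, e, rfl⟩
    exact gwCyl_measurable s e

lemma gw_real_zero (μX : Measure GWX) [IsProbabilityMeasure μX] {v : GWX → ℝ}
    (hv : Integrable v μX)
    (h0 : ∀ A ∈ gwCylSys, ∫ x in A, v x ∂μX = 0)
    (htot : ∫ x, v x ∂μX = 0) : v =ᵐ[μX] 0 := by
  set ν₁ := μX.withDensity (fun x => ENNReal.ofReal (v x)) with hν₁
  set ν₂ := μX.withDensity (fun x => ENNReal.ofReal (-v x)) with hν₂
  have hbound : ∀ x : GWX, ENNReal.ofReal (v x) ≤ ‖v x‖₊ := by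
    intro x
    rw [← enorm_eq_nnnorm, ← ofReal_norm]
    exact ENNReal.ofReal_le_ofReal (le_abs_self _)
  have hbound' : ∀ x : GWX, ENNReal.ofReal (-v x) ≤ ‖v x‖₊ := by
    intro x
    rw [← enorm_eq_nnnorm, ← ofReal_norm]
    exact ENNReal.ofReal_le_ofReal (by rw [Real.norm_eq_abs]; exact neg_le_abs _)
  have hfin1 : IsFiniteMeasure ν₁ :=
    isFiniteMeasure_withDensity ((lintegral_mono hbound).trans_lt hv.2).ne
  have hfin2 : IsFiniteMeasure ν₂ :=
    isFiniteMeasure_withDensity ((lintegral_mono hbound').trans_lt hv.2).ne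
  have key : ∀ A : Set GWX, MeasurableSet A →
      ∫ x in A, v x ∂μX = (ν₁ A).toReal - (ν₂ A).toReal := by
    intro A hA
    rw [hν₁, hν₂, withDensity_apply _ hA, withDensity_apply _ hA]
    exact integral_eq_lintegral_pos_part_sub_lintegral_neg_part hv.restrict
  have hAeq : ∀ A ∈ gwCylSys, ν₁ A = ν₂ A := by
    intro A hAC
    have hA : MeasurableSet A := by
      obtain ⟨s, e, rfl⟩ := hAC; exact gwCyl_measurable s e
    have h := h0 A hAC
    rw [key A hA] at h
    have h1 : ν₁ A ≠ ⊤ := measure_ne_top _ _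
    have h2 : ν₂ A ≠ ⊤ := measure_ne_top _ _
    exact (ENNReal.toReal_eq_toReal_iff' h1 h2).mp (by linarith)
  have huniv : ν₁ Set.univ = ν₂ Set.univ := by
    have h := htot
    rw [← setIntegral_univ, key Set.univ MeasurableSet.univ] at h
    exact (ENNReal.toReal_eq_toReal_iff' (measure_ne_top _ _) (measure_ne_top _ _)).mp (by linarith)
  have hνeq : ν₁ = ν₂ := ext_of_generate_finite gwCylSys gwCylSys_gen gwCylSys_pi hAeq huniv
  refine hv.ae_eq_zero_of_forall_setIntegral_eq_zero fun A hA _ => ?_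
  rw [key A hA, hνeq, sub_self]

lemma gw_complex_zero (μX : Measure GWX) [IsProbabilityMeasure μX] {u : GWX → ℂ}
    (hu : Integrable u μX)
    (h0 : ∀ A ∈ gwCylSys, ∫ x in A, u x ∂μX = 0)
    (htot : ∫ x, u x ∂μX = 0) : u =ᵐ[μX] 0 := by
  have hre : (fun x => (u x).re) =ᵐ[μX] 0 := by
    refine gw_real_zero μX hu.re (fun A hA => ?_) ?_
    · rw [show (fun x => (u x).re) = fun x => RCLike.re (u x) from rfl,
        integral_re hu.restrict, h0 A hA]
      simp
    · rw [show (fun x => (u x).re) = fun x => RCLike.re (u x) from rfl, integral_re hu, htot]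
      simp
  have him : (fun x => (u x).im) =ᵐ[μX] 0 := by
    refine gw_real_zero μX hu.im (fun A hA => ?_) ?_
    · rw [show (fun x => (u x).im) = fun x => RCLike.im (u x) from rfl,
        integral_im hu.restrict, h0 A hA]
      simp
    · rw [show (fun x => (u x).im) = fun x => RCLike.im (u x) from rfl, integral_im hu, htot]
      simp
  filter_upwards [hre, him] with x h1 h2
  have h1' : (u x).re = 0 := h1
  have h2' : (u x).im = 0 := h2
  exact Complex.ext h1' h2'
lemma gw_const_of_invariant (μX : Measure GWX) [IsProbabilityMeasure μX]
    (hHaar : ∀ y : GWX, μX.map (· + y) = μX) {w : GWX → ℂ}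
    (hw : Integrable w μX)
    (hinv : ∀ k, (fun x => w (x + gwDelta k)) =ᵐ[μX] w) :
    w =ᵐ[μX] (fun _ => ∫ x, w x ∂μX) := by
  set c := ∫ x, w x ∂μX with hc
  set u : GWX → ℂ := fun x => w x - c with hu_def
  have hu : Integrable u μX := hw.sub (integrable_const c)
  have hutot : ∫ x, u x ∂μX = 0 := by
    rw [hu_def, integral_sub hw (integrable_const c), integral_const]
    simp [hc]
  have hchar : ∀ S : Finset ℕ, ∫ x, gwChar S x * u x ∂μX = 0 := by
    intro S
    rcases S.eq_empty_or_nonempty with rfl | ⟨k, hk⟩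
    · simpa [gwChar] using hutot
    · have hgm : AEStronglyMeasurable (fun x => gwChar S x * u x) μX :=
        ((gwChar_measurable S).aestronglyMeasurable).mul hu.1
      have step : ∫ x, gwChar S x * u x ∂μX
          = ∫ x, gwChar S (x + gwDelta k) * u (x + gwDelta k) ∂μX := by
        conv_lhs => rw [← hHaar (gwDelta k)]
        rw [integral_map (meas_add (gwDelta k)).aemeasurable]
        rw [hHaar (gwDelta k)]
        exact hgm
      have huinv : (fun x => u (x + gwDelta k)) =ᵐ[μX] u := by
        filter_upwards [hinv k] with x hx
        simp only [hu_def]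
        rw [hx]
      have hpt : (fun x => gwChar S (x + gwDelta k) * u (x + gwDelta k))
          =ᵐ[μX] (fun x => -(gwChar S x * u x)) := by
        filter_upwards [huinv] with x hx
        rw [gwChar_add_delta S hk x, hx]
        ring
      have h2 : ∫ x, gwChar S x * u x ∂μX = -∫ x, gwChar S x * u x ∂μX := by
        conv_lhs => rw [step, integral_congr_ae hpt]
        rw [integral_neg]
      have h3 : (2:ℂ) * ∫ x, gwChar S x * u x ∂μX = 0 := by linear_combination h2
      exact (mul_eq_zero.mp h3).resolve_left two_ne_zero
  have hcylint : ∀ A ∈ gwCylSys, ∫ x in A, u x ∂μX = 0 := by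
    rintro A ⟨s, e, rfl⟩
    rw [← integral_indicator (gwCyl_measurable s e)]
    have hind : ∀ x : GWX, (gwCyl s e).indicator u x
        = ((2:ℂ)⁻¹)^s.card * ∑ t ∈ s.powerset,
            (∏ j ∈ t, (-1:ℂ)^((e j).val)) * (gwChar t x * u x) := by
      intro x
      have hprod : (∏ j ∈ s, (((1:ℂ) + (-1)^((e j).val) * (-1)^((x j).val))/2))
          = ((2:ℂ)⁻¹)^s.card * ∑ t ∈ s.powerset,
              (∏ j ∈ t, (-1:ℂ)^((e j).val)) * gwChar t x := by
        have e1 : ∀ j ∈ s, ((1:ℂ) + (-1)^((e j).val) * (-1)^((x j).val))/2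
            = ((-1:ℂ)^((e j).val) * (-1)^((x j).val) + 1) * 2⁻¹ := by
          intro j _; ring
        rw [Finset.prod_congr rfl e1, Finset.prod_mul_distrib, Finset.prod_const,
          Finset.prod_add]
        rw [mul_comm]
        congr 1
        refine Finset.sum_congr rfl fun t _ => ?_
        rw [Finset.prod_const, one_pow, mul_one, Finset.prod_mul_distrib, gwChar]
      by_cases hx : x ∈ gwCyl s e
      · rw [Set.indicator_of_mem hx]
        have h1 : (∏ j ∈ s, (((1:ℂ) + (-1)^((e j).val) * (-1)^((x j).val))/2)) = 1 := by
          refine Finset.prod_eq_one fun j hj => ?_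
          rw [gw_factor (x j) (e j), if_pos (hx j hj)]
        have := hprod.symm.trans h1
        calc u x = (∏ j ∈ s, (((1:ℂ) + (-1)^((e j).val) * (-1)^((x j).val))/2)) * u x := by
              rw [h1, one_mul]
          _ = _ := by rw [hprod, mul_assoc, Finset.sum_mul]
                      congr 1
                      exact Finset.sum_congr rfl fun t _ => by ring
      · rw [Set.indicator_of_notMem hx]
        have hx' : ∃ j ∈ s, ¬ x j = e j := by
          by_contra hcon
          push_neg at hcon
          exact hx hcon
        obtain ⟨j, hj, hne⟩ := hx'
        have h1 : (∏ j ∈ s, (((1:ℂ) + (-1)^((e j).val) * (-1)^((x j).val))/2)) = 0 := by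
          refine Finset.prod_eq_zero hj ?_
          rw [gw_factor (x j) (e j), if_neg hne]
        calc (0:ℂ) = (∏ j ∈ s, (((1:ℂ) + (-1)^((e j).val) * (-1)^((x j).val))/2)) * u x := by
              rw [h1, zero_mul]
          _ = _ := by rw [hprod, mul_assoc, Finset.sum_mul]
                      congr 1
                      exact Finset.sum_congr rfl fun t _ => by ring
    rw [integral_congr_ae (Filter.Eventually.of_forall hind)]
    have hint : ∀ t ∈ s.powerset, Integrable
        (fun x => (∏ j ∈ t, (-1:ℂ)^((e j).val)) * (gwChar t x * u x)) μX := by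
      intro t _
      exact ((hu.bdd_mul (gwChar_measurable t).aestronglyMeasurable
        (Filter.Eventually.of_forall (gwChar_norm t)))).const_mul _
    rw [integral_const_mul, integral_finset_sum _ hint]
    have : ∀ t ∈ s.powerset,
        ∫ x, (∏ j ∈ t, (-1:ℂ)^((e j).val)) * (gwChar t x * u x) ∂μX = 0 := by
      intro t _
      rw [integral_const_mul, hchar t, mul_zero]
    rw [Finset.sum_congr rfl this]
    simp
  have := gw_complex_zero μX hu hcylint hutot
  filter_upwards [this] with x hx
  have : w x - c = 0 := hx
  linear_combination this
lemma conj_neg_one_pow (n : ℕ) : (starRingEnd ℂ) ((-1:ℂ)^n) = (-1:ℂ)^n := by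
  rw [map_pow, map_neg, map_one]

lemma conj_gwSign (k : ℕ) (x : GWX) : (starRingEnd ℂ) (gwSign k x) = gwSign k x :=
  conj_neg_one_pow _

lemma conj_gwC (k : ℕ) (x : GWX) : (starRingEnd ℂ) (gwC k x) = gwC k x := by
  unfold gwC
  split_ifs
  · rw [map_one]
  · exact conj_neg_one_pow _
  · exact conj_neg_one_pow _

lemma gw_MJ (s c v z : ℂ) (hs : s * s = 1) (hc : c * c = 1) :
    s * Complex.I * c * (-v * Complex.I * (s * Complex.I * c * z))
      = v * Complex.I * z := by
  calc s * Complex.I * c * (-v * Complex.I * (s * Complex.I * c * z))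
      = (s*s) * (c*c) * (Complex.I*Complex.I) * Complex.I * (-v) * z := by ring
    _ = v * Complex.I * z := by rw [hs, hc, Complex.I_mul_I]; ring

end GWAux

theorem gwC_real_form_no_complex_structure
    (μX : Measure GWX) [IsProbabilityMeasure μX]
    (hHaar : ∀ y : GWX, μX.map (· + y) = μX)
    (J J' : ℕ → Lp ℂ 2 μX → Lp ℂ 2 μX)
    (hJ : ∀ k f, (↑(J k f) : GWX → ℂ) =ᵐ[μX] fun x =>
      gwSign k x * Complex.I * gwC k x * (↑f : GWX → ℂ) (x + gwDelta k))
    (hJ' : ∀ k f, (↑(J' k f) : GWX → ℂ) =ᵐ[μX] fun x =>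
      (-1 : ℂ) ^ (x k).val * Complex.I * (↑(J k f) : GWX → ℂ) x)
    (HR : Set (Lp ℂ 2 μX))
    (hHR : HR = {f : Lp ℂ 2 μX | ∀ᵐ x ∂μX,
      (↑f : GWX → ℂ) (gwFlip x) = (starRingEnd ℂ) ((↑f : GWX → ℂ) x)}) :
    ¬ ∃ T : Lp ℂ 2 μX → Lp ℂ 2 μX,
        (∀ f ∈ HR, T f ∈ HR) ∧
        (∀ f ∈ HR, ∀ g ∈ HR, T (f + g) = T f + T g) ∧
        (∀ (r : ℝ), ∀ f ∈ HR, T (r • f) = r • T f) ∧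
        (∃ C : ℝ, ∀ f ∈ HR, ‖T f‖ ≤ C * ‖f‖) ∧
        (∀ f ∈ HR, T (T f) = -f) ∧
        (∀ f ∈ HR, ∀ g ∈ HR, (inner ℂ (T f) (T g) : ℂ).re = (inner ℂ f g : ℂ).re) ∧
        (∀ k : ℕ, ∀ f ∈ HR, T (J k f) = J k (T f) ∧ T (J' k f) = J' k (T f)) := by
  subst hHR
  rintro ⟨T, hT1, -, hTsmul, -, hTsq, -, hTcomm⟩
  classical
  -- the constant function 1 as an element of L²
  have honeM : MemLp (fun _ : GWX => (1:ℂ)) 2 μX := memLp_const 1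
  set one' : Lp ℂ 2 μX := honeM.toLp (fun _ => (1:ℂ)) with hone_def
  have hone : (↑one' : GWX → ℂ) =ᵐ[μX] (fun _ => (1:ℂ)) := honeM.coeFn_toLp
  -- membership of 1 in the real form
  have honeHR : one' ∈ {f : Lp ℂ 2 μX | ∀ᵐ x ∂μX,
      (↑f : GWX → ℂ) (gwFlip x) = (starRingEnd ℂ) ((↑f : GWX → ℂ) x)} := by
    filter_upwards [hone, GWAux.ae_comp_flip hHaar hone] with x h1 h2
    rw [h2, h1]
    simp
  -- J k preserves the real form
  have hJmem : ∀ (k : ℕ) (f : Lp ℂ 2 μX),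
      (∀ᵐ x ∂μX, (↑f : GWX → ℂ) (gwFlip x) = (starRingEnd ℂ) ((↑f : GWX → ℂ) x)) →
      (∀ᵐ x ∂μX, (↑(J k f) : GWX → ℂ) (gwFlip x)
        = (starRingEnd ℂ) ((↑(J k f) : GWX → ℂ) x)) := by
    intro k f hf
    have h3 : (fun x => (↑f : GWX → ℂ) (gwFlip (x + gwDelta k))) =ᵐ[μX]
        (fun x => (starRingEnd ℂ) ((↑f : GWX → ℂ) (x + gwDelta k))) :=
      GWAux.ae_comp_add hHaar (gwDelta k) hf
    filter_upwards [GWAux.ae_comp_flip hHaar (hJ k f), h3, hJ k f] with x e2 e3 e1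
    rw [e2]
    show gwSign k (gwFlip x) * Complex.I * gwC k (gwFlip x)
        * (↑f : GWX → ℂ) (gwFlip x + gwDelta k) = _
    rw [GWAux.flip_add_delta, e3, e1, map_mul, map_mul, map_mul, GWAux.conj_gwSign,
      GWAux.conj_gwC, Complex.conj_I]
    linear_combination (Complex.I * (starRingEnd ℂ) ((↑f : GWX → ℂ) (x + gwDelta k)))
      * (GWAux.gwSign_gwC_flip k x)
  -- J' k preserves the real form
  have hJ'mem : ∀ (k : ℕ) (f : Lp ℂ 2 μX),
      (∀ᵐ x ∂μX, (↑f : GWX → ℂ) (gwFlip x) = (starRingEnd ℂ) ((↑f : GWX → ℂ) x)) →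
      (∀ᵐ x ∂μX, (↑(J' k f) : GWX → ℂ) (gwFlip x)
        = (starRingEnd ℂ) ((↑(J' k f) : GWX → ℂ) x)) := by
    intro k f hf
    filter_upwards [GWAux.ae_comp_flip hHaar (hJ' k f), hJ' k f, hJmem k f hf]
      with x e2 e1 e3
    rw [e2]
    show (-1:ℂ) ^ ((gwFlip x) k).val * Complex.I * (↑(J k f) : GWX → ℂ) (gwFlip x) = _
    have h4 : ((-1:ℂ)) ^ (((gwFlip x) k).val) = -(-1:ℂ) ^ ((x k).val) :=
      GWAux.neg_one_pow_val_sub (x k)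
    rw [h4, e3, e1, map_mul, map_mul, GWAux.conj_neg_one_pow, Complex.conj_I]
    ring
  -- the multiplication operators M_k = J_k ∘ J'_k
  have hMfor : ∀ (k : ℕ) (f : Lp ℂ 2 μX),
      (↑(J k (J' k f)) : GWX → ℂ) =ᵐ[μX]
        (fun x => (-1:ℂ) ^ ((x k).val) * Complex.I * (↑f : GWX → ℂ) x) := by
    intro k f
    filter_upwards [hJ k (J' k f), GWAux.ae_comp_add hHaar (gwDelta k) (hJ' k f),
      GWAux.ae_comp_add hHaar (gwDelta k) (hJ k f)] with x e1 e2 e3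
    rw [e1]
    show gwSign k x * Complex.I * gwC k x * (↑(J' k f) : GWX → ℂ) (x + gwDelta k) = _
    rw [e2]
    show gwSign k x * Complex.I * gwC k x * ((-1:ℂ) ^ (((x + gwDelta k) k).val) * Complex.I
      * (↑(J k f) : GWX → ℂ) (x + gwDelta k)) = _
    rw [e3]
    show gwSign k x * Complex.I * gwC k x * ((-1:ℂ) ^ (((x + gwDelta k) k).val) * Complex.I
      * (gwSign k (x + gwDelta k) * Complex.I * gwC k (x + gwDelta k)
          * (↑f : GWX → ℂ) (x + gwDelta k + gwDelta k))) = _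
    have h4 : ((-1:ℂ)) ^ (((x + gwDelta k) k).val) = -(-1:ℂ) ^ ((x k).val) := by
      rw [GWAux.add_delta_apply_self]
      exact GWAux.neg_one_pow_val_add_one (x k)
    rw [h4, GWAux.gwSign_add_delta, GWAux.gwC_add_delta, GWAux.add_delta_delta]
    exact GWAux.gw_MJ _ _ _ _ (GWAux.gwSign_sq k x) (GWAux.gwC_sq k x)
  -- iterated multiplication operators
  have hN : ∀ (l : List ℕ) (f : Lp ℂ 2 μX),
      (↑(List.foldr (fun j g => J j (J' j g)) f l) : GWX → ℂ) =ᵐ[μX]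
        (fun x => Complex.I ^ l.length
          * ((l.map fun j => (-1:ℂ)^((x j).val)).prod) * (↑f : GWX → ℂ) x) := by
    intro l
    induction l with
    | nil =>
      intro f
      refine Filter.Eventually.of_forall fun x => ?_
      simp
    | cons j l ih =>
      intro f
      filter_upwards [hMfor j (List.foldr (fun j g => J j (J' j g)) f l), ih f] with x e1 e2
      show (↑(J j (J' j (List.foldr (fun j g => J j (J' j g)) f l))) : GWX → ℂ) x = _
      rw [e1, e2]
      simp only [List.length_cons, List.map_cons, List.prod_cons, pow_succ]
      ring
  have hNmem : ∀ (l : List ℕ) (f : Lp ℂ 2 μX),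
      (∀ᵐ x ∂μX, (↑f : GWX → ℂ) (gwFlip x) = (starRingEnd ℂ) ((↑f : GWX → ℂ) x)) →
      (∀ᵐ x ∂μX, (↑(List.foldr (fun j g => J j (J' j g)) f l) : GWX → ℂ) (gwFlip x)
        = (starRingEnd ℂ) ((↑(List.foldr (fun j g => J j (J' j g)) f l) : GWX → ℂ) x)) := by
    intro l
    induction l with
    | nil => intro f hf; exact hf
    | cons j l ih =>
      intro f hf
      exact hJmem j _ (hJ'mem j _ (ih f hf))
  have hNcomm : ∀ (l : List ℕ) (f : Lp ℂ 2 μX),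
      (∀ᵐ x ∂μX, (↑f : GWX → ℂ) (gwFlip x) = (starRingEnd ℂ) ((↑f : GWX → ℂ) x)) →
      T (List.foldr (fun j g => J j (J' j g)) f l)
        = List.foldr (fun j g => J j (J' j g)) (T f) l := by
    intro l
    induction l with
    | nil => intro f _; rfl
    | cons j l ih =>
      intro f hf
      show T (J j (J' j (List.foldr (fun j g => J j (J' j g)) f l))) = _
      rw [(hTcomm j _ (hJ'mem j _ (hNmem l f hf))).1,
        (hTcomm j _ (hNmem l f hf)).2, ih f hf]
      rfl
  -- J k applied to the constant 1
  have hkey : ∀ k : ℕ, J k one'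
      = (GWAux.gwEps k : ℝ) • List.foldr (fun j g => J j (J' j g)) one' (GWAux.gwList k) := by
    intro k
    apply Lp.ext
    filter_upwards [hJ k one',
      Lp.coeFn_smul (GWAux.gwEps k : ℝ) (List.foldr (fun j g => J j (J' j g)) one' (GWAux.gwList k)),
      hN (GWAux.gwList k) one', GWAux.ae_comp_add hHaar (gwDelta k) hone, hone]
      with x e1 e2 e3 e4 e5
    rw [e1]
    show gwSign k x * Complex.I * gwC k x * (↑one' : GWX → ℂ) (x + gwDelta k) = _
    rw [e4, mul_one, e2]
    show _ = (GWAux.gwEps k : ℝ) •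
      ((↑(List.foldr (fun j g => J j (J' j g)) one' (GWAux.gwList k)) : GWX → ℂ) x)
    rw [e3, e5, mul_one, Complex.real_smul]
    linear_combination GWAux.gw_key k x
  -- invariance of w = T 1 under coordinate flips
  set w : GWX → ℂ := (↑(T one') : GWX → ℂ) with hw_def
  have hwint : Integrable w μX := (Lp.memLp (T one')).integrable (by norm_num)
  have hinv : ∀ k : ℕ, (fun x => w (x + gwDelta k)) =ᵐ[μX] w := by
    intro k
    have hc1 := (hTcomm k one' honeHR).1
    rw [hkey k, hTsmul _ _ (hNmem (GWAux.gwList k) one' honeHR),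
      hNcomm (GWAux.gwList k) one' honeHR] at hc1
    -- hc1 : J k (T one') = gwEps k • Nop (gwList k) (T one')
    have e2' : (↑(J k (T one')) : GWX → ℂ) =ᵐ[μX]
        (GWAux.gwEps k : ℝ) • (↑(List.foldr (fun j g => J j (J' j g)) (T one')
          (GWAux.gwList k)) : GWX → ℂ) := by
      rw [← hc1]
      exact Lp.coeFn_smul _ _
    filter_upwards [hJ k (T one'), e2', hN (GWAux.gwList k) (T one')] with x e1 e2 e3
    show w (x + gwDelta k) = w x
    have ha : gwSign k x * Complex.I * gwC k x ≠ 0 :=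
      mul_ne_zero (mul_ne_zero (GWAux.gwSign_ne k x) Complex.I_ne_zero) (GWAux.gwC_ne k x)
    apply mul_left_cancel₀ ha
    have e1' : gwSign k x * Complex.I * gwC k x * w (x + gwDelta k)
        = (↑(J k (T one')) : GWX → ℂ) x := e1.symm
    rw [e1', e2]
    have e4 : ((GWAux.gwEps k : ℝ) • (↑(List.foldr (fun j g => J j (J' j g)) (T one')
        (GWAux.gwList k)) : GWX → ℂ)) x
        = (GWAux.gwEps k : ℂ) * ((↑(List.foldr (fun j g => J j (J' j g)) (T one')
          (GWAux.gwList k)) : GWX → ℂ) x) := by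
      rw [Pi.smul_apply, Complex.real_smul]
    rw [e4, e3]
    linear_combination (-(w x)) * GWAux.gw_key k x
  -- w is a.e. constant
  have hconst : w =ᵐ[μX] (fun _ => ∫ x, w x ∂μX) :=
    GWAux.gw_const_of_invariant μX hHaar hwint hinv
  set c : ℂ := ∫ x, w x ∂μX with hc_def
  -- c is real
  have hwHR : ∀ᵐ x ∂μX, w (gwFlip x) = (starRingEnd ℂ) (w x) := hT1 one' honeHR
  have hflipint : ∫ x, w (gwFlip x) ∂μX = c := by
    have hm : AEStronglyMeasurable w (μX.map gwFlip) := by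
      rw [(GWAux.mp_flip hHaar).map_eq]
      exact (Lp.memLp (T one')).1
    have h := integral_map (μ := μX) (GWAux.mp_flip hHaar).measurable.aemeasurable hm
    rw [(GWAux.mp_flip hHaar).map_eq] at h
    exact h.symm
  have hcreal : (starRingEnd ℂ) c = c := by
    have h1 : ∫ x, (starRingEnd ℂ) (w x) ∂μX = (starRingEnd ℂ) c := integral_conj
    rw [← h1, ← integral_congr_ae hwHR, hflipint]
  have hcre : (c.re : ℂ) = c := Complex.conj_eq_iff_re.mp hcreal
  -- T one' is the constant c.re
  have hTone : T one' = (c.re : ℝ) • one' := by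
    apply Lp.ext
    filter_upwards [hconst, Lp.coeFn_smul (c.re : ℝ) one', hone] with x e1 e2 e3
    show w x = _
    rw [e1, e2, Pi.smul_apply, e3, Complex.real_smul, mul_one, hcre]
  have hfinal := hTsq one' honeHR
  rw [hTone, hTsmul _ _ honeHR, hTone, smul_smul] at hfinal
  -- evaluate at a point
  have hnb : (MeasureTheory.ae μX).NeBot := ae_neBot.mpr (IsProbabilityMeasure.ne_zero μX)
  have hae : ∀ᵐ x ∂μX, ((c.re * c.re : ℝ) : ℂ) * 1 = -(1:ℂ) := by
    have h1 : (↑((c.re * c.re : ℝ) • one') : GWX → ℂ) =ᵐ[μX] (↑(-one') : GWX → ℂ) := by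
      rw [hfinal]
    filter_upwards [h1, Lp.coeFn_smul (c.re * c.re : ℝ) one', Lp.coeFn_neg one', hone]
      with x e1 e2 e3 e4
    have := e1
    rw [e2, e3] at this
    rw [Pi.smul_apply, e4, Pi.neg_apply, e4] at this
    rw [Complex.real_smul] at this
    simpa using this
  obtain ⟨x, hx⟩ := hae.exists
  have hre : c.re * c.re = -1 := by
    have h := congrArg Complex.re hx
    simpa using h
  nlinarith [sq_nonneg c.re, hre]
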